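/- Let $x : [0,\infty) \to \mathbb{R}$ be continuous on $[0,\infty)$ and continuously differentiable on $(0,\infty)$, and suppose $x$ solves $^{C}_{0}D^{\alpha}_{t} x(t) = f(x(t))$ for $t > 0$ with $0 < \alpha < 1$, where $f : \mathbb{R} \to \mathbb{R}$ satisfies $f(u)\,u \le \lambda u^2$ for all $u$ with $\lambda < 0$. If $x(0) > 0$, then $x(t) \ge 0$ for all $t > 0$. -/

import Mathlib

open Set

/-- The Caputo fractional derivative of order `α` of `x` at time `t`. -/
noncomputable def caputoDeriv (α : ℝ) (x : ℝ → ℝ) (t : ℝ) : ℝ :=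
  (1 / Real.Gamma (1 - α)) * ∫ τ in (0 : ℝ)..t, (t - τ) ^ (-α) * deriv x τ

/-- Key lemma: at an interior point which is a global minimum over `[0, t0]`,
the Caputo integral is nonpositive. -/
lemma caputo_integral_nonpos_at_min (α : ℝ) (hα0 : 0 < α) (hα1 : α < 1)
    (x : ℝ → ℝ)
    (hdiff : ∀ t ∈ Ioi (0 : ℝ), DifferentiableAt ℝ x t)
    (hderiv_cont : ContinuousOn (deriv x) (Ioi 0))
    (t0 : ℝ) (ht0 : 0 < t0)
    (hmin : ∀ τ ∈ Icc (0 : ℝ) t0, x t0 ≤ x τ) :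
    (∫ τ in (0 : ℝ)..t0, (t0 - τ) ^ (-α) * deriv x τ) ≤ 0 := by
  set h : ℝ → ℝ := fun τ => (t0 - τ) ^ (-α) * deriv x τ with hh
  by_cases hint : IntervalIntegrable h MeasureTheory.volume 0 t0
  swap
  · rw [intervalIntegral.integral_undef hint]
  -- Bound on the derivative near t0
  obtain ⟨M, hM⟩ : ∃ M, ∀ τ ∈ Icc (t0 / 2) t0, ‖deriv x τ‖ ≤ M := by
    apply isCompact_Icc.exists_bound_of_continuousOn
    exact hderiv_cont.mono (fun τ hτ => lt_of_lt_of_le (by linarith) hτ.1)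
  have hM0 : 0 ≤ M := le_trans (norm_nonneg _) (hM t0 ⟨by linarith, le_rfl⟩)
  -- Lipschitz-type bound near t0
  have hg : ∀ δ ∈ Ioo (0 : ℝ) (t0 / 2), x (t0 - δ) - x t0 ≤ M * δ := by
    intro δ hδ
    have hmem1 : t0 - δ ∈ Icc (t0 / 2) t0 := ⟨by linarith [hδ.2], by linarith [hδ.1]⟩
    have hmem2 : t0 ∈ Icc (t0 / 2) t0 := ⟨by linarith, le_rfl⟩
    have hbound := (convex_Icc (t0 / 2) t0).norm_image_sub_le_of_norm_hasDerivWithin_le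
      (f := x) (f' := deriv x) (C := M)
      (fun τ hτ => ((hdiff τ (lt_of_lt_of_le (by linarith) hτ.1)).hasDerivAt).hasDerivWithinAt)
      hM hmem2 hmem1
    have heq : ‖(t0 - δ) - t0‖ = δ := by
      rw [show (t0 - δ) - t0 = -δ by ring, norm_neg, Real.norm_eq_abs,
        abs_of_pos hδ.1]
    have h3 : x (t0 - δ) - x t0 ≤ ‖x (t0 - δ) - x t0‖ := by
      rw [Real.norm_eq_abs]; exact le_abs_self _
    calc x (t0 - δ) - x t0 ≤ ‖x (t0 - δ) - x t0‖ := h3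
      _ ≤ M * ‖(t0 - δ) - t0‖ := hbound
      _ = M * δ := by rw [heq]
  -- Step 1: for every ε ∈ (0, t0), ∫ ε..t0 h ≤ 0
  have hF : ∀ ε ∈ Ioo (0 : ℝ) t0, (∫ τ in ε..t0, h τ) ≤ 0 := by
    intro ε hε
    have hεt0 : ε ≤ t0 := hε.2.le
    have hintε : IntervalIntegrable h MeasureTheory.volume ε t0 := by
      apply hint.mono_set
      rw [uIcc_of_le hεt0, uIcc_of_le ht0.le]
      exact Icc_subset_Icc hε.1.le le_rfl
    -- the IBP bound for δ small
    have key : ∀ δ ∈ Ioo (0 : ℝ) (min (t0 / 2) (t0 - ε)),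
        (∫ τ in ε..(t0 - δ), h τ) ≤ M * δ ^ (1 - α) := by
      intro δ hδ
      have hδ0 : 0 < δ := hδ.1
      have hδ1 : δ < t0 / 2 := lt_of_lt_of_le hδ.2 (min_le_left _ _)
      have hδ2 : δ < t0 - ε := lt_of_lt_of_le hδ.2 (min_le_right _ _)
      set s := t0 - δ with hs
      have hεs : ε ≤ s := by simp only [hs]; linarith
      have hst0 : s < t0 := by simp only [hs]; linarith
      -- IBP
      have hu : ∀ τ ∈ uIcc ε s,
          HasDerivAt (fun τ => (t0 - τ) ^ (-α)) (α * (t0 - τ) ^ (-α - 1)) τ := by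
        intro τ hτ
        rw [uIcc_of_le hεs] at hτ
        have h1 : 0 < t0 - τ := by
          have := hτ.2; simp only [hs] at this ⊢; linarith
        have hbase : HasDerivAt (fun τ : ℝ => t0 - τ) (-1) τ := by
          simpa using (hasDerivAt_id τ).const_sub t0
        have := (Real.hasDerivAt_rpow_const (x := t0 - τ) (p := -α)
          (Or.inl h1.ne')).comp τ hbase
        rw [show α * (t0 - τ) ^ (-α - 1) = -α * (t0 - τ) ^ (-α - 1) * -1 by ring]
        exact this
      have hv : ∀ τ ∈ uIcc ε s,
          HasDerivAt (fun τ => x τ - x t0) (deriv x τ) τ := by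
        intro τ hτ
        rw [uIcc_of_le hεs] at hτ
        have : 0 < τ := lt_of_lt_of_le hε.1 hτ.1
        exact ((hdiff τ this).hasDerivAt).sub_const _
      have hu' : IntervalIntegrable (fun τ => α * (t0 - τ) ^ (-α - 1))
          MeasureTheory.volume ε s := by
        apply ContinuousOn.intervalIntegrable
        apply ContinuousOn.mul continuousOn_const
        apply ContinuousOn.rpow_const (continuousOn_const.sub continuousOn_id)
        intro τ hτ
        rw [uIcc_of_le hεs] at hτ
        left
        have := hτ.2; simp only [hs] at this; intro hc; simp at hc; linarith
      have hv' : IntervalIntegrable (deriv x) MeasureTheory.volume ε s := by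
        apply ContinuousOn.intervalIntegrable
        apply hderiv_cont.mono
        intro τ hτ
        rw [uIcc_of_le hεs] at hτ
        exact lt_of_lt_of_le hε.1 hτ.1
      have ibp := intervalIntegral.integral_mul_deriv_eq_deriv_mul hu hv hu' hv'
      -- the remaining integral is nonneg
      have hnn : 0 ≤ ∫ τ in ε..s, α * (t0 - τ) ^ (-α - 1) * (x τ - x t0) := by
        apply intervalIntegral.integral_nonneg hεs
        intro τ hτ
        apply mul_nonneg (mul_nonneg hα0.le (Real.rpow_nonneg (by linarith [hτ.2, hst0]) _))
        have : τ ∈ Icc (0 : ℝ) t0 := ⟨le_trans hε.1.le hτ.1, le_trans hτ.2 hst0.le⟩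
        linarith [hmin τ this]
      have hterm2 : 0 ≤ (t0 - ε) ^ (-α) * (x ε - x t0) := by
        apply mul_nonneg (Real.rpow_nonneg (by linarith) _)
        have : ε ∈ Icc (0 : ℝ) t0 := ⟨hε.1.le, hεt0⟩
        linarith [hmin ε this]
      have hterm1 : (t0 - s) ^ (-α) * (x s - x t0) ≤ M * δ ^ (1 - α) := by
        have h1 : t0 - s = δ := by simp only [hs]; ring
        rw [h1]
        have h2 : x s - x t0 ≤ M * δ := hg δ ⟨hδ0, hδ1⟩
        calc δ ^ (-α) * (x s - x t0) ≤ δ ^ (-α) * (M * δ) :=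
              mul_le_mul_of_nonneg_left h2 (Real.rpow_nonneg hδ0.le _)
          _ = M * δ ^ (1 - α) := by
              rw [show (1 - α : ℝ) = -α + 1 by ring, Real.rpow_add hδ0, Real.rpow_one]
              ring
      calc (∫ τ in ε..s, h τ) = (t0 - s) ^ (-α) * (x s - x t0)
            - (t0 - ε) ^ (-α) * (x ε - x t0)
            - ∫ τ in ε..s, α * (t0 - τ) ^ (-α - 1) * (x τ - x t0) := ibp
        _ ≤ M * δ ^ (1 - α) := by linarith
    -- take δ → 0⁺
    have T1 : Filter.Tendsto (fun δ => ∫ τ in ε..(t0 - δ), h τ)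
        (nhdsWithin 0 (Ioi 0)) (nhds (∫ τ in ε..t0, h τ)) := by
      have contOn := intervalIntegral.continuousOn_primitive_interval' hintε
        (left_mem_uIcc (a := ε) (b := t0))
      have cw : ContinuousWithinAt (fun b => ∫ τ in ε..b, h τ) (uIcc ε t0) t0 :=
        contOn t0 right_mem_uIcc
      have hmap : Filter.Tendsto (fun δ : ℝ => t0 - δ) (nhdsWithin 0 (Ioi 0))
          (nhdsWithin t0 (uIcc ε t0)) := by
        apply tendsto_nhdsWithin_of_tendsto_nhds_of_eventually_within
        · have : Filter.Tendsto (fun δ : ℝ => t0 - δ) (nhds 0) (nhds (t0 - 0)) :=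
            (continuous_const.sub continuous_id).tendsto 0
          simpa using this.mono_left nhdsWithin_le_nhds
        · filter_upwards [Ioo_mem_nhdsGT_of_mem (show (0:ℝ) ∈ Ico (0:ℝ) (t0 - ε) from ⟨le_rfl, by linarith [hε.2]⟩)] with δ hδ
          rw [uIcc_of_le hεt0]
          exact ⟨by linarith [hδ.2], by linarith [hδ.1]⟩
      have := cw.tendsto.comp hmap
      simpa [Function.comp_def] using this
    have T2 : Filter.Tendsto (fun δ : ℝ => M * δ ^ (1 - α))
        (nhdsWithin 0 (Ioi 0)) (nhds 0) := by
      have h1 : Filter.Tendsto (fun δ : ℝ => δ ^ (1 - α)) (nhds 0) (nhds ((0:ℝ) ^ (1 - α))) :=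
        (Real.continuousAt_rpow_const 0 (1 - α) (Or.inr (by linarith))).tendsto
      rw [Real.zero_rpow (by intro hc; exact absurd hc (by intro hc'; linarith))] at h1
      have h2 : Filter.Tendsto (fun δ : ℝ => δ ^ (1 - α)) (nhdsWithin 0 (Ioi 0)) (nhds 0) :=
        h1.mono_left (nhdsWithin_le_nhds (s := Ioi 0))
      simpa using h2.const_mul M
    have hev : (fun δ => ∫ τ in ε..(t0 - δ), h τ) ≤ᶠ[nhdsWithin 0 (Ioi 0)]
        (fun δ : ℝ => M * δ ^ (1 - α)) := by
      filter_upwards [Ioo_mem_nhdsGT_of_mem (show (0:ℝ) ∈ Ico (0:ℝ) (min (t0 / 2) (t0 - ε)) from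
        ⟨le_rfl, lt_min (by linarith) (by linarith [hε.2])⟩)] with δ hδ
      exact key δ hδ
    exact le_of_tendsto_of_tendsto T1 T2 hev
  -- Step 2: take ε → 0⁺
  have hsplit : ∀ ε ∈ Ioo (0 : ℝ) t0,
      (∫ τ in (0:ℝ)..t0, h τ) ≤ ∫ τ in (0:ℝ)..ε, h τ := by
    intro ε hε
    have h1 : IntervalIntegrable h MeasureTheory.volume 0 ε := by
      apply hint.mono_set
      rw [uIcc_of_le hε.1.le, uIcc_of_le ht0.le]
      exact Icc_subset_Icc le_rfl hε.2.le
    have h2 : IntervalIntegrable h MeasureTheory.volume ε t0 := by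
      apply hint.mono_set
      rw [uIcc_of_le hε.2.le, uIcc_of_le ht0.le]
      exact Icc_subset_Icc hε.1.le le_rfl
    have := intervalIntegral.integral_add_adjacent_intervals h1 h2
    linarith [hF ε hε]
  have T3 : Filter.Tendsto (fun ε => ∫ τ in (0:ℝ)..ε, h τ)
      (nhdsWithin 0 (Ioi 0)) (nhds 0) := by
    have contOn := intervalIntegral.continuousOn_primitive_interval' hint
      (left_mem_uIcc (a := (0:ℝ)) (b := t0))
    have cw : ContinuousWithinAt (fun b => ∫ τ in (0:ℝ)..b, h τ) (uIcc 0 t0) 0 :=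
      contOn 0 left_mem_uIcc
    have hmap : Filter.Tendsto (fun ε : ℝ => ε) (nhdsWithin 0 (Ioi 0))
        (nhdsWithin 0 (uIcc 0 t0)) := by
      apply tendsto_nhdsWithin_of_tendsto_nhds_of_eventually_within
      · exact Filter.Tendsto.mono_left (Filter.tendsto_id) (nhdsWithin_le_nhds (s := Ioi (0:ℝ)))
      · filter_upwards [Ioo_mem_nhdsGT_of_mem (show (0:ℝ) ∈ Ico (0:ℝ) t0 from ⟨le_rfl, ht0⟩)] with ε hε
        rw [uIcc_of_le ht0.le]
        exact ⟨hε.1.le, hε.2.le⟩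
    have := cw.tendsto.comp hmap
    simpa [Function.comp_def] using this
  have hev2 : (fun _ : ℝ => ∫ τ in (0:ℝ)..t0, h τ) ≤ᶠ[nhdsWithin 0 (Ioi 0)]
      (fun ε => ∫ τ in (0:ℝ)..ε, h τ) := by
    filter_upwards [Ioo_mem_nhdsGT_of_mem (show (0:ℝ) ∈ Ico (0:ℝ) t0 from ⟨le_rfl, ht0⟩)] with ε hε
    exact hsplit ε hε
  exact le_of_tendsto_of_tendsto tendsto_const_nhds T3 hev2

theorem caputo_fode_nonneg_preservation (α : ℝ) (hα0 : 0 < α) (hα1 : α < 1)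
    (f : ℝ → ℝ) (lam : ℝ) (hlam : lam < 0)
    (hf : ∀ u : ℝ, f u * u ≤ lam * u ^ 2)
    (x : ℝ → ℝ)
    (hcont : ContinuousOn x (Ici 0))
    (hdiff : ∀ t ∈ Ioi (0 : ℝ), DifferentiableAt ℝ x t)
    (hderiv_cont : ContinuousOn (deriv x) (Ioi 0))
    (hode : ∀ t : ℝ, 0 < t → caputoDeriv α x t = f (x t))
    (hx0 : 0 < x 0) :
    ∀ t : ℝ, 0 < t → 0 ≤ x t := by
  intro t ht
  by_contra hneg
  push_neg at hneg
  -- minimum of x on [0, t]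
  have hc : ContinuousOn x (Icc 0 t) := hcont.mono (fun τ hτ => hτ.1)
  obtain ⟨t0, ht0mem, ht0min⟩ := isCompact_Icc.exists_isMinOn
    (nonempty_Icc.2 ht.le) hc
  rw [isMinOn_iff] at ht0min
  have hxt0 : x t0 < 0 := lt_of_le_of_lt (ht0min t ⟨ht.le, le_rfl⟩) hneg
  have ht0pos : 0 < t0 := by
    rcases eq_or_lt_of_le ht0mem.1 with h | h
    · exfalso; rw [← h] at hxt0; linarith
    · exact h
  have hmin : ∀ τ ∈ Icc (0 : ℝ) t0, x t0 ≤ x τ := by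
    intro τ hτ
    exact ht0min τ ⟨hτ.1, le_trans hτ.2 ht0mem.2⟩
  have hI := caputo_integral_nonpos_at_min α hα0 hα1 x hdiff hderiv_cont t0 ht0pos hmin
  have hΓ : 0 < Real.Gamma (1 - α) := Real.Gamma_pos_of_pos (by linarith)
  have hode' := hode t0 ht0pos
  unfold caputoDeriv at hode'
  have hfpos : 0 < f (x t0) := by
    have := hf (x t0)
    nlinarith [sq_nonneg (x t0), mul_pos (neg_pos.2 hlam) (mul_pos (neg_pos.2 hxt0) (neg_pos.2 hxt0))]
  have hle : (1 / Real.Gamma (1 - α)) * (∫ τ in (0:ℝ)..t0, (t0 - τ) ^ (-α) * deriv x τ) ≤ 0 :=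
    mul_nonpos_of_nonneg_of_nonpos (by positivity) hI
  linarith [hode' ▸ hle]
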